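/- Let (X,G,K) be a G-metric type space where G satisfies the rectangle inequality G(x,y,z) ≤ K[G(x,w,w)+G(w,y,z)], and let T : X → X be such that every Tⁿ is Lipschitzian with Lip(Tⁿ) → 0, and suppose some orbit {Tⁿx : n ≥ 1} is bounded with bound α (so G(T^{n+h}x, Tⁿx, Tⁿx) ≤ α for all n,h ≥ 0). Then (Tⁿx) is a G-Cauchy sequence. -/

import Mathlib

open Filter Topology

/-- A `G`-metric type space structure on `X` with constant `K`. -/
structure IsGMetricType {X : Type*} (G : X → X → X → ℝ) (K : ℝ) : Prop where
  K_ge_one : 1 ≤ K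
  nonneg : ∀ x y z, 0 ≤ G x y z
  eq_zero : ∀ x, G x x x = 0
  pos : ∀ x y, x ≠ y → 0 < G x x y
  axG3 : ∀ x y z, z ≠ y → G x x y ≤ G x y z
  symm_left : ∀ x y z, G x y z = G y x z
  symm_right : ∀ x y z, G x y z = G x z y
  polygon : ∀ (x y z : X) (n : ℕ) (w : Fin (n + 1) → X),
    G x y z ≤ K * (G x (w 0) (w 0)
      + (∑ i : Fin n, G (w i.castSucc) (w i.succ) (w i.succ))
      + G (w (Fin.last n)) y z)

/-- A `G`-metric type space with the rectangle-type inequality (G5') instead of (G5). -/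
structure IsGMetricTypeRect {X : Type*} (G : X → X → X → ℝ) (K : ℝ) : Prop where
  K_ge_one : 1 ≤ K
  nonneg : ∀ x y z, 0 ≤ G x y z
  eq_zero : ∀ x, G x x x = 0
  pos : ∀ x y, x ≠ y → 0 < G x x y
  axG3 : ∀ x y z, z ≠ y → G x x y ≤ G x y z
  symm_left : ∀ x y z, G x y z = G y x z
  symm_right : ∀ x y z, G x y z = G x z y
  rect : ∀ x y z w, G x y z ≤ K * (G x w w + G w y z)

/-- `G`-convergence of a sequence to a point. -/
def GConverges {X : Type*} (G : X → X → X → ℝ) (s : ℕ → X) (x : X) : Prop :=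
  Tendsto (fun n => G x (s n) (s n)) atTop (nhds 0)

/-- `G`-Cauchy sequence. -/
def GCauchySeq {X : Type*} (G : X → X → X → ℝ) (s : ℕ → X) : Prop :=
  ∀ ε > 0, ∃ N, ∀ m n, N ≤ m → N ≤ n → G (s n) (s m) (s m) < ε

/-- `G`-completeness. -/
def GComplete {X : Type*} (G : X → X → X → ℝ) : Prop :=
  ∀ s : ℕ → X, GCauchySeq G s → ∃ x, GConverges G s x

theorem stmt19 {X : Type*} (G : X → X → X → ℝ) (K : ℝ) (hG : IsGMetricTypeRect G K)
    (T : X → X) (lip : ℕ → ℝ) (hlipnn : ∀ n, 0 ≤ lip n)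
    (hlip : ∀ (n : ℕ) (x y z : X), G (T^[n] x) (T^[n] y) (T^[n] z) ≤ lip n * G x y z)
    (hlip0 : Tendsto lip atTop (nhds 0))
    (x : X) (α : ℝ)
    (hbound : ∀ n h : ℕ, G (T^[n + h] x) (T^[n] x) (T^[n] x) ≤ α) :
    GCauchySeq G (fun n => T^[n] x) := by
  have hα : 0 ≤ α := by
    have := hbound 0 0
    simp [hG.eq_zero] at this
    linarith [this]
  have hK : (1:ℝ) ≤ K := hG.K_ge_one
  -- key estimate
  have key : ∀ n h : ℕ, G (T^[n + h] x) (T^[n] x) (T^[n] x) ≤ lip n * α := by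
    intro n h
    have h1 : T^[n + h] x = T^[n] (T^[h] x) := by
      rw [Function.iterate_add_apply]
    have h2 := hlip n (T^[h] x) x x
    have h3 : G (T^[h] x) x x ≤ α := by
      have := hbound 0 h
      simpa using this
    calc G (T^[n + h] x) (T^[n] x) (T^[n] x)
        = G (T^[n] (T^[h] x)) (T^[n] x) (T^[n] x) := by rw [h1]
      _ ≤ lip n * G (T^[h] x) x x := h2
      _ ≤ lip n * α := mul_le_mul_of_nonneg_left h3 (hlipnn n)
  -- swap estimate
  have swap : ∀ a b : X, G a b b ≤ 2 * K * G b a a := by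
    intro a b
    have h1 : G a b b = G b b a := by rw [hG.symm_left, hG.symm_right]
    have h2 := hG.rect b b a a
    have h3 : G a b a = G b a a := hG.symm_left a b a
    nlinarith [hG.nonneg b a a]
  intro ε hε
  have hεK : 0 < ε / (2 * K * (α + 1)) := by positivity
  have := (Metric.tendsto_atTop.mp hlip0) _ hεK
  obtain ⟨N, hN⟩ := this
  refine ⟨N, fun m n hm hn => ?_⟩
  have hlt : ∀ k, N ≤ k → lip k < ε / (2 * K * (α + 1)) := by
    intro k hk
    have := hN k hk
    rw [Real.dist_eq, abs_sub_lt_iff] at this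
    linarith [this.1]
  have hfin : ∀ k, N ≤ k → 2 * K * (lip k * α) < ε := by
    intro k hk
    have h1 := hlt k hk
    have h2 : lip k * (α + 1) < ε / (2 * K * (α + 1)) * (α + 1) := by
      apply mul_lt_mul_of_pos_right h1; linarith
    have h3 : ε / (2 * K * (α + 1)) * (α + 1) = ε / (2 * K) := by
      field_simp
    have hKpos : (0:ℝ) < 2 * K := by linarith
    have h4 : lip k * α ≤ lip k * (α + 1) := by nlinarith [hlipnn k]
    have h5 : lip k * α < ε / (2 * K) := by linarith [h3 ▸ h2]
    calc 2 * K * (lip k * α) < 2 * K * (ε / (2 * K)) := by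
          exact mul_lt_mul_of_pos_left h5 hKpos
      _ = ε := by field_simp
  simp only
  rcases le_or_gt m n with hmn | hmn
  · -- n = m + (n - m)
    have h1 : G (T^[n] x) (T^[m] x) (T^[m] x) ≤ lip m * α := by
      have := key m (n - m)
      rwa [Nat.add_sub_cancel' hmn] at this
    have h2 := hfin m hm
    nlinarith [mul_nonneg (hlipnn m) hα]
  · -- m = n + (m - n)
    have h1 : G (T^[m] x) (T^[n] x) (T^[n] x) ≤ lip n * α := by
      have := key n (m - n)
      rwa [Nat.add_sub_cancel' hmn.le] at this
    have h2 := swap (T^[n] x) (T^[m] x)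
    have h3 := hfin n hn
    nlinarith
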